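/- Fix ν ≥ 0, α ∈ (0,1), and an integer x₀ ≥ 1. For every s ∈ (0,1): lim_{t↓0} [ (h_α(s))^{x₀} − (h_α(h_t(0)·s))^{x₀} ] / ( 1 − (h_{αt}(0))^{x₀} ) = α^{−1} s · h_α'(s) · (h_α(s))^{x₀−1}. In particular, the conditional transition probabilities of the entrance-law process near time 0 converge to a nontrivial probability distribution (the limit equals 1 at s = 1 since h_α'(1) = α). -/

import Mathlib

open Filter Finset

/-- The linear fractional generating function `h_a(s)` (with parameter ν). -/
noncomputable def h (ν a s : ℝ) : ℝ :=
  if s = 1 then 1 else 1 - a * (1/(1-s) + ν/2 * (1-a))⁻¹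

lemma h_zero (ν t : ℝ) : h ν t 0 = 1 - t * (1 + ν/2 * (1-t))⁻¹ := by
  simp [h]

lemma hasDerivAt_h0 (ν : ℝ) (hν : 0 ≤ ν) :
    HasDerivAt (fun t => h ν t 0) (-(1 + ν/2)⁻¹) 0 := by
  have hpos : (0:ℝ) < 1 + ν/2 := by linarith
  have h1 : HasDerivAt (fun t : ℝ => (1:ℝ) - t) (-1) 0 := by
    simpa using (hasDerivAt_id (0:ℝ)).const_sub 1
  have hg : HasDerivAt (fun t : ℝ => 1 + ν/2 * (1-t)) (ν/2 * (-1)) 0 := by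
    exact (h1.const_mul (ν/2)).const_add 1
  have hg0 : (1 + ν/2 * (1-(0:ℝ))) ≠ 0 := by norm_num; linarith
  have hginv := hg.inv hg0
  have hmul := (hasDerivAt_id (0:ℝ)).mul hginv
  have hfin := hmul.const_sub 1
  have hfin2 : HasDerivAt (fun t : ℝ => h ν t 0)
      (-(1 * (1 + ν/2 * (1-(0:ℝ)))⁻¹ + id (0:ℝ) * (-(ν/2 * -1) / (1 + ν/2 * (1-(0:ℝ))) ^ 2))) 0 :=
    hfin.congr_of_eventuallyEq (Filter.Eventually.of_forall fun t => by simp [h_zero])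
  convert hfin2 using 1
  norm_num

theorem stmt11 (ν : ℝ) (hν : 0 ≤ ν) (α : ℝ) (hα : α ∈ Set.Ioo (0 : ℝ) 1)
    (x₀ : ℕ) (hx₀ : 1 ≤ x₀) (s : ℝ) (hs : s ∈ Set.Ioo (0 : ℝ) 1) :
    Tendsto (fun t : ℝ =>
        ((h ν α s) ^ x₀ - (h ν α (h ν t 0 * s)) ^ x₀) / (1 - (h ν (α * t) 0) ^ x₀))
      (nhdsWithin 0 (Set.Ioi 0))
      (nhds (α⁻¹ * s * deriv (h ν α) s * (h ν α s) ^ (x₀ - 1))) := by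
  obtain ⟨hα0, hα1⟩ := hα
  obtain ⟨hs0, hs1⟩ := hs
  have hpos : (0:ℝ) < 1 + ν/2 := by linarith
  set c : ℝ := (1 + ν/2)⁻¹ with hc
  have hcpos : 0 < c := inv_pos.2 hpos
  have hs_ne1 : s ≠ 1 := ne_of_lt hs1
  have h1s : (0:ℝ) < 1 - s := by linarith
  -- differentiability of h ν α at s
  have hφ : DifferentiableAt ℝ (fun u : ℝ => 1 - α * (1/(1-u) + ν/2 * (1-α))⁻¹) s := by
    have h1u : HasDerivAt (fun u : ℝ => (1:ℝ) - u) (-1) s := by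
      simpa using (hasDerivAt_id s).const_sub 1
    have hinv := h1u.inv (by linarith : (1:ℝ) - s ≠ 0)
    have hw : HasDerivAt (fun u : ℝ => 1/(1-u) + ν/2 * (1-α))
        (- -1 / (1-s)^2) s := by
      have h2 := hinv.add_const (ν/2 * (1-α))
      exact h2.congr_of_eventuallyEq (Filter.Eventually.of_forall fun u => by simp [one_div])
    have hwne : (1/(1-s) + ν/2 * (1-α)) ≠ 0 := by
      have : 0 < 1/(1-s) := by positivity
      have : 0 ≤ ν/2 * (1-α) := by
        apply mul_nonneg (by linarith) (by linarith)
      positivity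
    exact (((hw.inv hwne).const_mul α).const_sub 1).differentiableAt
  have heqn : h ν α =ᶠ[nhds s] (fun u : ℝ => 1 - α * (1/(1-u) + ν/2 * (1-α))⁻¹) := by
    filter_upwards [compl_singleton_mem_nhds hs_ne1] with u hu
    have hu' : u ≠ 1 := hu
    simp [h, hu']
  have hdiff : DifferentiableAt ℝ (h ν α) s :=
    hφ.congr_of_eventuallyEq heqn
  set d : ℝ := deriv (h ν α) s with hd_def
  have hd : HasDerivAt (h ν α) d s := hdiff.hasDerivAt
  -- derivative of t ↦ h ν t 0 at 0
  have hf0 := hasDerivAt_h0 ν hν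
  have hval0 : h ν 0 0 = 1 := by rw [h_zero]; ring
  -- numerator
  have hu : HasDerivAt (fun t : ℝ => h ν t 0 * s) (-c * s) 0 := hf0.mul_const s
  have hu0 : h ν 0 0 * s = s := by rw [hval0]; ring
  have hG : HasDerivAt (fun u : ℝ => (h ν α u) ^ x₀)
      ((x₀:ℝ) * (h ν α s) ^ (x₀-1) * d) s := hd.pow x₀
  have hGs : HasDerivAt (fun u : ℝ => (h ν α u) ^ x₀)
      ((x₀:ℝ) * (h ν α s) ^ (x₀-1) * d) ((fun t : ℝ => h ν t 0 * s) 0) := by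
    simpa [hu0] using hG
  have hcomp := hGs.comp 0 hu
  have hN : HasDerivAt
      (fun t : ℝ => (h ν α s) ^ x₀ - (h ν α (h ν t 0 * s)) ^ x₀)
      ((x₀:ℝ) * (h ν α s) ^ (x₀-1) * d * (c * s)) 0 := by
    have := hcomp.const_sub ((h ν α s) ^ x₀)
    exact this.congr_deriv (by ring)
  -- denominator
  have hfα : HasDerivAt (fun t : ℝ => h ν (α * t) 0) (-c * α) 0 := by
    have hlin : HasDerivAt (fun t : ℝ => α * t) α 0 := by
      simpa using (hasDerivAt_id (0:ℝ)).const_mul α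
    have : HasDerivAt ((fun t : ℝ => h ν t 0) ∘ (fun t : ℝ => α * t)) (-c * α) 0 := by
      have h2 : HasDerivAt (fun t : ℝ => h ν t 0) (-c) ((fun t : ℝ => α * t) 0) := by
        simpa using hf0
      simpa using h2.comp 0 hlin
    exact this
  have hD : HasDerivAt (fun t : ℝ => 1 - (h ν (α * t) 0) ^ x₀)
      ((x₀:ℝ) * c * α) 0 := by
    have hpow : HasDerivAt (fun t : ℝ => (h ν (α * t) 0) ^ x₀)
        ((x₀:ℝ) * (h ν (α * 0) 0) ^ (x₀-1) * (-c * α)) 0 := hfα.pow x₀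
    have := hpow.const_sub 1
    exact this.congr_deriv (by rw [mul_zero, hval0]; ring)
  -- values at 0
  have hN0 : ((h ν α s) ^ x₀ - (h ν α (h ν 0 0 * s)) ^ x₀) = 0 := by
    rw [hu0]; ring
  have hD0 : (1 - (h ν (α * 0) 0) ^ x₀) = 0 := by
    rw [mul_zero, hval0]; simp
  -- slope limits
  have hNslope : Tendsto (fun t : ℝ =>
      ((h ν α s) ^ x₀ - (h ν α (h ν t 0 * s)) ^ x₀) / t)
      (nhdsWithin 0 (Set.Ioi 0))
      (nhds ((x₀:ℝ) * (h ν α s) ^ (x₀-1) * d * (c * s))) := by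
    have := hasDerivAt_iff_tendsto_slope.mp hN
    have h2 := this.mono_left (nhdsWithin_mono 0 (fun t (ht : t ∈ Set.Ioi 0) =>
      (ne_of_gt ht : t ≠ 0)))
    refine h2.congr (fun t => ?_)
    simp only [slope_def_field, sub_zero]
    rw [hN0, sub_zero]
  have hDslope : Tendsto (fun t : ℝ => (1 - (h ν (α * t) 0) ^ x₀) / t)
      (nhdsWithin 0 (Set.Ioi 0))
      (nhds ((x₀:ℝ) * c * α)) := by
    have := hasDerivAt_iff_tendsto_slope.mp hD
    have h2 := this.mono_left (nhdsWithin_mono 0 (fun t (ht : t ∈ Set.Ioi 0) =>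
      (ne_of_gt ht : t ≠ 0)))
    refine h2.congr (fun t => ?_)
    simp only [slope_def_field, sub_zero]
    rw [hD0, sub_zero]
  have hD'ne : ((x₀:ℝ) * c * α) ≠ 0 := by
    have : (0:ℝ) < x₀ := by exact_mod_cast hx₀
    positivity
  have hdiv := hNslope.div hDslope hD'ne
  have hkey : ((x₀:ℝ) * (h ν α s) ^ (x₀-1) * d * (c * s)) / ((x₀:ℝ) * c * α)
      = α⁻¹ * s * d * (h ν α s) ^ (x₀ - 1) := by
    have hx : ((x₀:ℝ)) ≠ 0 := by positivity
    field_simp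
  rw [← hkey]
  refine hdiv.congr' ?_
  filter_upwards [self_mem_nhdsWithin] with t (ht : t ∈ Set.Ioi 0)
  have htne : t ≠ 0 := ne_of_gt ht
  simp only [Pi.div_apply]
  rw [div_div_div_cancel_right₀ htne]
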